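/- Let (A,+) be a cancellative semigroup and X, Y ⊆ A finite non-empty sets with ⟨Y⟩ commutative, and suppose X + 2Y = X + Y + ȳ for some unit ȳ ∈ Y. Then |X + Y| ≥ ord(y − y₀) for all y ∈ Y and all units y₀ ∈ Y; in particular, |X + Y| ≥ γ(Y). -/

import Mathlib

open scoped Pointwise Classical
open AddSubsemigroup

namespace CD

variable {A : Type*} [AddSemigroup A]

/-- An element `z` is cancellable if both translation maps are injective. -/
def Cancellable (z : A) : Prop :=
  Function.Injective (fun x : A => x + z) ∧ Function.Injective (fun x : A => z + x)

/-- `e` is a two-sided identity of the semigroup. -/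
def IsIdentity (e : A) : Prop := ∀ x : A, x + e = x ∧ e + x = x

/-- `u` is a unit: there is a two-sided identity and a two-sided inverse of `u`. -/
def IsUnitElem (u : A) : Prop := ∃ e v : A, IsIdentity e ∧ u + v = e ∧ v + u = e

/-- The inverse of a unit (junk value otherwise). -/
noncomputable def neg (u : A) : A :=
  if h : IsUnitElem u then h.choose_spec.choose else u

/-- `ord a` is the cardinality of the subsemigroup generated by `a`. -/
noncomputable def ord (a : A) : ℕ∞ := (closure {a} : Set A).encard

/-- The units of `A` lying in `W`. -/
def unitsIn (W : Set A) : Set A := {w ∈ W | IsUnitElem w}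

/-- A set is commutative if its elements pairwise commute. -/
def CommOn (S : Set A) : Prop := ∀ a ∈ S, ∀ b ∈ S, a + b = b + a

/-- The Cauchy-Davenport constant of a set. -/
noncomputable def gamma (X : Set A) : ℕ∞ :=
  if X.encard ≤ 1 then X.encard
  else ⨆ x₀ ∈ unitsIn X, ⨅ x ∈ {x ∈ X | x ≠ x₀}, ord (x + neg x₀)

/-- The sumset `X 0 + X 1 + ⋯ + X n` of a tuple of sets. -/
def sumsetTup : (n : ℕ) → (Fin (n + 1) → Set A) → Set A
  | 0, X => X 0
  | n + 1, X => sumsetTup n (fun i => X i.castSucc) + X (Fin.last (n + 1))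

/-- The sum `x 0 + x 1 + ⋯ + x n` of a tuple of elements. -/
def sumTup : (n : ℕ) → (Fin (n + 1) → A) → A
  | 0, x => x 0
  | n + 1, x => sumTup n (fun i => x i.castSucc) + x (Fin.last (n + 1))

/-- `nfold n a` is the `(n+1)`-fold sum `a + a + ⋯ + a`. -/
def nfold : ℕ → A → A
  | 0, a => a
  | n + 1, a => nfold n a + a

/-- `⟨⟨W⟩⟩`, the subsemigroup generated by `W` together with the inverses of its units. -/
noncomputable def dclosure (W : Set A) : Set A :=
  (closure (W ∪ neg '' unitsIn W) : Set A)

/-- `Ỹ_z = {y ∈ Y : z ∈ X + Y + y}`. -/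
noncomputable def Ytil (X Y : Set A) (z : A) : Set A := {y ∈ Y | z ∈ X + Y + {y}}

/-- `z − W = {w : z ∈ w + W}`. -/
def subFrom (z : A) (W : Set A) : Set A := {w : A | ∃ u ∈ W, w + u = z}

end CD

open CD

lemma neg_spec {A : Type*} [AddSemigroup A] {u : A} (h : IsUnitElem u) :
    ∃ e : A, IsIdentity e ∧ u + neg u = e ∧ neg u + u = e := by
  unfold CD.neg
  rw [dif_pos h]
  exact ⟨h.choose, h.choose_spec.choose_spec⟩

theorem stmt18 {A : Type*} [AddSemigroup A] [IsCancelAdd A] (X Y : Set A)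
    (hXf : X.Finite) (hXne : X.Nonempty) (hYf : Y.Finite) (hYne : Y.Nonempty)
    (hcomm : CommOn (AddSubsemigroup.closure Y : Set A))
    (h : ∃ ybar ∈ Y, IsUnitElem ybar ∧ X + (Y + Y) = X + Y + {ybar}) :
    (∀ y ∈ Y, ∀ y₀ ∈ Y, IsUnitElem y₀ → ord (y + neg y₀) ≤ (X + Y).encard) ∧
    gamma Y ≤ (X + Y).encard := by
  obtain ⟨yb, hybY, hybU, heq⟩ := h
  set S := X + Y with hSdef
  have hSf : S.Finite := hXf.add hYf
  have hSne : S.Nonempty := hXne.add hYne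
  have hS : S + Y = S + {yb} := by rw [hSdef, add_assoc, heq]
  clear_value S
  have hencS : ∀ a : A, (S + {a}).encard = S.encard := by
    intro a
    rw [Set.add_singleton]
    exact Set.InjOn.encard_image (fun x _ y _ hxy => by
      exact add_right_cancel hxy)
  have key : ∀ y ∈ Y, S + {y} = S + {yb} := by
    intro y hy
    have hsub : S + {y} ⊆ S + {yb} := by
      rw [← hS]
      exact Set.add_subset_add_left (Set.singleton_subset_iff.mpr hy)
    have hfin : (S + {yb}).Finite := hSf.add (Set.finite_singleton _)
    exact hfin.eq_of_subset_of_encard_le' hsub (by rw [hencS, hencS])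
  have keyW : ∀ y ∈ Y, ∀ y₀ ∈ Y, IsUnitElem y₀ → S + {y + neg y₀} = S := by
    intro y hy y₀ hy₀ h0
    obtain ⟨e, he, hue, _⟩ := neg_spec h0
    calc S + {y + neg y₀} = (S + {y}) + {neg y₀} := by
          rw [add_assoc, Set.singleton_add_singleton]
      _ = (S + {y₀}) + {neg y₀} := by rw [key y hy, key y₀ hy₀]
      _ = S + {y₀ + neg y₀} := by rw [add_assoc, Set.singleton_add_singleton]
      _ = S := by
          rw [hue, Set.add_singleton]
          ext x
          simp only [Set.mem_image]
          constructor
          · rintro ⟨s, hs, rfl⟩; rwa [(he s).1]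
          · intro hx; exact ⟨x, hx, (he x).1⟩
  have main : ∀ y ∈ Y, ∀ y₀ ∈ Y, IsUnitElem y₀ → ord (y + neg y₀) ≤ S.encard := by
    intro y hy y₀ hy₀ h0
    set w := y + neg y₀ with hw
    have hcl : ∀ t ∈ closure ({w} : Set A), S + {t} = S := by
      intro t ht
      induction ht using AddSubsemigroup.closure_induction with
      | mem x hx =>
          rw [Set.mem_singleton_iff] at hx
          rw [hx]; exact keyW y hy y₀ hy₀ h0
      | add a b ha hb iha ihb =>
          rw [← Set.singleton_add_singleton, ← add_assoc, iha, ihb]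
    obtain ⟨s, hs⟩ := hSne
    have hinj : Set.InjOn (fun t => s + t) (closure ({w} : Set A) : Set A) :=
      fun a _ b _ hab => by exact add_left_cancel hab
    have himg : (fun t => s + t) '' (closure ({w} : Set A) : Set A) ⊆ S := by
      rintro _ ⟨t, ht, rfl⟩
      have h1 : s + t ∈ S + {t} := Set.add_mem_add hs rfl
      rwa [hcl t ht] at h1
    calc ord w = ((fun t => s + t) '' (closure ({w} : Set A) : Set A)).encard :=
          (hinj.encard_image).symm
      _ ≤ S.encard := Set.encard_le_encard himg
  refine ⟨main, ?_⟩
  unfold gamma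
  split_ifs with h1
  · -- Y.encard ≤ 1 : show Y.encard ≤ S.encard
    obtain ⟨x, hx⟩ := hXne
    have hinj : Set.InjOn (fun y => x + y) Y := fun a _ b _ hab => by
      exact add_left_cancel hab
    have himg : (fun y => x + y) '' Y ⊆ S := by
      rintro _ ⟨y, hy, rfl⟩
      rw [hSdef]
      exact Set.add_mem_add hx hy
    calc Y.encard = ((fun y => x + y) '' Y).encard := (hinj.encard_image).symm
      _ ≤ S.encard := Set.encard_le_encard himg
  · refine iSup₂_le fun y₀ hy₀ => ?_
    obtain ⟨hy₀Y, hy₀U⟩ := hy₀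
    obtain ⟨y, hyY, hyne⟩ := Set.exists_ne_of_one_lt_encard (lt_of_not_ge h1) y₀
    exact le_trans (iInf₂_le y ⟨hyY, hyne⟩) (main y hyY y₀ hy₀Y hy₀U)
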